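/- arXiv:1810.06762 — 3 statements merged into one kernel-verified Lean document; each statement's English description precedes it below -/
import Mathlib

section
/- Let L be a finite distributive lattice and K a closed interval of L. Then K is a cutting (i.e., every maximal chain of L contains at least one element of K) if and only if L equals the union of the up-set of the bottom of K and the down-set of the top of K, i.e., L = ↑(⊥_K) ∪ ↓(⊤_K). -/
/-- An interval `K = [a, b]` of a finite distributive lattice `L` is a cutting
(every maximal chain of `L` meets `K`) iff `L = ↑a ∪ ↓b`. -/
theorem cutting_iff_union (L : Type*) [DistribLattice L] [Fintype L]
    (a b : L) (hab : a ≤ b) :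
    (∀ C : Set L, IsMaxChain (· ≤ ·) C → (C ∩ Set.Icc a b).Nonempty) ↔
      (Set.univ : Set L) = Set.Ici a ∪ Set.Iic b := by
  constructor
  · -- cutting → union
    intro h
    by_contra hne
    have : ∃ x : L, ¬ a ≤ x ∧ ¬ x ≤ b := by
      by_contra hx
      push_neg at hx
      apply hne
      ext y
      simp only [Set.mem_univ, Set.mem_union, Set.mem_Ici, Set.mem_Iic, true_iff]
      by_cases hy : a ≤ y
      · exact Or.inl hy
      · exact Or.inr (hx y hy)
    obtain ⟨x, hax, hxb⟩ := this
    obtain ⟨C, hC, hxC⟩ := Set.Subsingleton.isChain (Set.subsingleton_singleton (a := x))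
      |>.exists_maxChain
    obtain ⟨c, hcC, hca, hcb⟩ := h C hC
    have hx : x ∈ C := hxC rfl
    rcases eq_or_ne c x with rfl | hne'
    · exact hax hca
    · rcases hC.1 hcC hx hne' with hle | hle
      · exact hax (hca.trans hle)
      · exact hxb (hle.trans hcb)
  · -- union → cutting
    intro h C hC
    -- C is nonempty
    have hCne : C.Nonempty := by
      by_contra hE
      rw [Set.not_nonempty_iff_eq_empty] at hE
      subst hE
      have := hC.2 (Set.subsingleton_singleton (a := a)).isChain (Set.empty_subset _)
      exact (Set.singleton_ne_empty a) this.symm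
    -- every element is ≥ a or ≤ b
    have key : ∀ y : L, a ≤ y ∨ y ≤ b := by
      intro y
      have : y ∈ Set.Ici a ∪ Set.Iic b := h ▸ Set.mem_univ y
      simpa using this
    -- get minimum of C, then m ⊓ b ∈ C
    obtain ⟨m, hmC⟩ := hCne
    -- the set C ∩ Iic b is nonempty: m ⊓ b is comparable with everything in C? need min of C
    -- take m to be a minimal element of C
    obtain ⟨m, hmC, hmmin⟩ := Set.Finite.exists_minimalFor id C (Set.toFinite C) ⟨m, hmC⟩
    have hmb : ∀ c ∈ C, m ⊓ b ≤ c := by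
      intro c hcC
      rcases eq_or_ne c m with rfl | hne'
      · exact inf_le_left
      · rcases hC.1 hcC hmC hne' with hle | hle
        · exact absurd (le_antisymm hle (hmmin hcC hle)) hne'
        · exact le_trans inf_le_left hle
    have hmbC : m ⊓ b ∈ C := by
      have hchain : IsChain (· ≤ ·) (insert (m ⊓ b) C) := by
        apply hC.1.insert
        intro c hcC _
        exact Or.inl (hmb c hcC)
      have := hC.2 hchain (Set.subset_insert _ _)
      rw [this]
      exact Set.mem_insert _ _
    -- take maximum x of C ∩ Iic b
    have hne2 : (C ∩ Set.Iic b).Nonempty := ⟨m ⊓ b, hmbC, inf_le_right⟩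
    obtain ⟨x, ⟨hxC, hxb⟩, hxmax⟩ :=
      Set.Finite.exists_maximalFor id _ (Set.toFinite (C ∩ Set.Iic b)) hne2
    -- z = x ⊔ a is comparable with everything in C
    set z := x ⊔ a with hz
    have hzb : z ≤ b := sup_le hxb hab
    have hcomp : ∀ c ∈ C, z ≤ c ∨ c ≤ z := by
      intro c hcC
      have hcx : c ≤ x ∨ x ≤ c := by
        rcases eq_or_ne c x with rfl | hne'
        · exact Or.inl le_rfl
        · exact (hC.1 hcC hxC hne').imp id id
      rcases key c with hac | hcb
      · rcases hcx with h1 | h1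
        · exact Or.inr (h1.trans le_sup_left)
        · exact Or.inl (sup_le h1 hac)
      · -- c ≤ b, so c ∈ C ∩ Iic b, so by maximality c ≤ x
        rcases hcx with h1 | h1
        · exact Or.inr (h1.trans le_sup_left)
        · have : x = c := le_antisymm h1 (hxmax ⟨hcC, hcb⟩ h1)
          subst this
          exact Or.inr le_sup_left
    have hzC : z ∈ C := by
      have hchain : IsChain (· ≤ ·) (insert z C) := by
        apply hC.1.insert
        intro c hcC _
        exact (hcomp c hcC).imp id id
      have := hC.2 hchain (Set.subset_insert _ _)
      rw [this]
      exact Set.mem_insert _ _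
    have hxz : x = z := by
      exact le_antisymm le_sup_left (hxmax ⟨hzC, hzb⟩ le_sup_left)
    refine ⟨x, hxC, ?_, hxb⟩
    rw [hxz]
    exact le_sup_right
end

section
/- The number of upper sets of the crown poset ⋈_{2n} (the 2n-element crown) equals the Lucas number L_{2n}, and L_{2n} = F_{2n+1} + F_{2n-1}. -/
/-- Lucas numbers: `L_0 = 2`, `L_1 = 1`, `L_{k+2} = L_{k+1} + L_k`
(so `L_2 = 3`). -/
def lucas : ℕ → ℕ
  | 0 => 2
  | 1 => 1
  | n + 2 => lucas (n + 1) + lucas n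

/-- The crown poset `⋈_{2n}` on minimal elements `a_1, …, a_n` and maximal elements
`b_1, …, b_n`, with `a_i < b_i` and `a_i < b_{i+1}` (indices mod `n`). -/
def Crown (n : ℕ) := Fin n ⊕ Fin n

instance (n : ℕ) [NeZero n] : PartialOrder (Crown n) where
  le x y := x = y ∨ ∃ i j : Fin n, x = Sum.inl i ∧ y = Sum.inr j ∧ (j = i ∨ j = i + 1)
  le_refl _ := Or.inl rfl
  le_trans a b c hab hbc := by
    rcases hab with rfl | ⟨i, j, rfl, rfl, hij⟩
    · exact hbc
    · rcases hbc with rfl | ⟨i', j', h, _, _⟩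
      · exact Or.inr ⟨i, j, rfl, rfl, hij⟩
      · exact absurd h (by simp)
  le_antisymm a b hab hba := by
    rcases hab with rfl | ⟨i, j, rfl, rfl, _⟩
    · rfl
    · rcases hba with h | ⟨i', j', h, _, _⟩
      · exact h.symm
      · exact absurd h (by simp)

instance (n : ℕ) : Fintype (Crown n) := inferInstanceAs (Fintype (Fin n ⊕ Fin n))


/-- linear "no two adjacent trues" condition -/
def ch (m : ℕ) (z : Fin m → Bool) : Prop :=
  ∀ i : ℕ, (h : i + 1 < m) → ¬(z ⟨i, by omega⟩ = true ∧ z ⟨i + 1, h⟩ = true)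

/-- cyclic "no two adjacent trues" condition -/
def cyc (m : ℕ) (z : Fin m → Bool) : Prop :=
  ∀ i : Fin m, ¬(z i = true ∧ z ⟨(i.1 + 1) % m, Nat.mod_lt _ i.pos⟩ = true)

lemma zmk {m : ℕ} {α : Type*} (z : Fin m → α) {a b : ℕ} (ha : a < m) (hb : b < m)
    (hab : a = b) : z ⟨a, ha⟩ = z ⟨b, hb⟩ := by subst hab; rfl

lemma card_split {α : Type*} [Finite α] (P : α → Prop) (b : α → Bool) :
    Nat.card {x : α // P x} =
      Nat.card {x : α // P x ∧ b x = false} + Nat.card {x : α // P x ∧ b x = true} := by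
  rw [← Nat.card_sum]
  apply Nat.card_congr
  exact
  { toFun := fun x => if h : b x.1 = true then .inr ⟨x.1, x.2, h⟩
      else .inl ⟨x.1, x.2, by simpa using h⟩
    invFun := fun y => y.elim (fun u => ⟨u.1, u.2.1⟩) (fun u => ⟨u.1, u.2.1⟩)
    left_inv := fun x => by by_cases h : b x.1 = true <;> simp [h]
    right_inv := fun y => by
      rcases y with u | u
      · have := u.2.2; simp [this]
      · have := u.2.2; simp [this] }

def consEquiv (m : ℕ) (s : Bool) (P : (Fin (m+1) → Bool) → Prop) (Q : (Fin m → Bool) → Prop)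
    (h1 : ∀ z, P z → z 0 = s)
    (h2 : ∀ z, P z → Q (fun i => z i.succ))
    (h3 : ∀ y, Q y → P (Fin.cons s y)) :
    {z // P z} ≃ {y // Q y} where
  toFun z := ⟨fun i => z.1 i.succ, h2 _ z.2⟩
  invFun y := ⟨Fin.cons s y.1, h3 _ y.2⟩
  left_inv z := by
    apply Subtype.ext; funext i
    refine Fin.cases ?_ ?_ i
    · simp [h1 _ z.2]
    · intro j; simp
  right_inv y := by apply Subtype.ext; funext i; simp

lemma fin_mk_zero {m : ℕ} (h : 0 < m + 1) : (⟨0, h⟩ : Fin (m+1)) = 0 := by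
  apply Fin.ext; simp

lemma cons_mk_succ {m : ℕ} (s : Bool) (y : Fin m → Bool) (i : ℕ) (h : i + 1 < m + 1) :
    (Fin.cons s y : Fin (m+1) → Bool) ⟨i + 1, h⟩ = y ⟨i, by omega⟩ := by
  have hs : (⟨i + 1, h⟩ : Fin (m+1)) = (⟨i, Nat.lt_of_succ_lt_succ h⟩ : Fin m).succ := by
    apply Fin.ext; simp
  rw [hs, Fin.cons_succ]

lemma cons_mk_zero {m : ℕ} (s : Bool) (y : Fin m → Bool) (h : 0 < m + 1) :
    (Fin.cons s y : Fin (m+1) → Bool) ⟨0, h⟩ = s := by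
  rw [fin_mk_zero]; simp

lemma cardAux (k : ℕ) : ∀ (s e : Bool),
    Nat.card {z : Fin (k+1) → Bool //
        ch (k+1) z ∧ z 0 = s ∧ (e = true → z (Fin.last k) = false)} =
      (if e then (if s then Nat.fib k else Nat.fib (k+1))
       else (if s then Nat.fib (k+1) else Nat.fib (k+2))) := by
  induction k with
  | zero =>
    intro s e
    rcases e with _ | _
    · have hne : Nonempty {z : Fin 1 → Bool //
          ch 1 z ∧ z 0 = s ∧ (false = true → z (Fin.last 0) = false)} :=
        ⟨⟨fun _ => s, by intro i h; omega, rfl, by simp⟩⟩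
      have hsub : Subsingleton {z : Fin 1 → Bool //
          ch 1 z ∧ z 0 = s ∧ (false = true → z (Fin.last 0) = false)} := by
        constructor; rintro ⟨z, _, hz, _⟩ ⟨w, _, hw, _⟩
        apply Subtype.ext
        funext i
        have hi : i = 0 := Subsingleton.elim i 0
        subst hi
        show z 0 = w 0
        rw [hz, hw]
      rw [Nat.card_unique]
      rcases s with _ | _ <;> simp [Nat.fib]
    · rcases s with _ | _
      · have hne : Nonempty {z : Fin 1 → Bool //
            ch 1 z ∧ z 0 = false ∧ (true = true → z (Fin.last 0) = false)} :=
          ⟨⟨fun _ => false, by intro i h; omega, rfl, fun _ => rfl⟩⟩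
        have hsub : Subsingleton {z : Fin 1 → Bool //
            ch 1 z ∧ z 0 = false ∧ (true = true → z (Fin.last 0) = false)} := by
          constructor; rintro ⟨z, _, hz, _⟩ ⟨w, _, hw, _⟩
          apply Subtype.ext
          funext i
          have hi : i = 0 := Subsingleton.elim i 0
          subst hi
          show z 0 = w 0
          rw [hz, hw]
        rw [Nat.card_unique]; simp [Nat.fib]
      · have : IsEmpty {z : Fin 1 → Bool //
            ch 1 z ∧ z 0 = true ∧ (true = true → z (Fin.last 0) = false)} := by
          constructor; rintro ⟨z, _, hz, hz'⟩
          have h1 := hz' rfl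
          have h0 : Fin.last 0 = 0 := rfl
          rw [h0, hz] at h1; exact Bool.noConfusion h1
        rw [Nat.card_of_isEmpty]; simp [Nat.fib]
  | succ k ih =>
    intro s e
    have key := Nat.card_congr (consEquiv (k+1) s
      (fun z => ch (k+2) z ∧ z 0 = s ∧ (e = true → z (Fin.last (k+1)) = false))
      (fun y => (ch (k+1) y ∧ (e = true → y (Fin.last k) = false)) ∧ (s = true → y 0 = false))
      (fun z hz => hz.2.1)
      (fun z hz => by
        obtain ⟨hch, hz0, hlast⟩ := hz
        refine ⟨⟨?_, ?_⟩, ?_⟩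
        · intro i h
          have h2 := hch (i+1) (by omega)
          exact fun hc => h2 ⟨hc.1, hc.2⟩
        · intro he
          have h2 := hlast he
          rw [← Fin.succ_last] at h2
          exact h2
        · intro hs
          have h01 := hch 0 (by omega)
          rw [fin_mk_zero, hz0, hs] at h01
          show z ((0 : Fin (k+1)).succ) = false
          have hse : (0 : Fin (k+1)).succ = ⟨1, by omega⟩ := by apply Fin.ext; simp
          rw [hse]
          cases hv : z ⟨1, by omega⟩
          · rfl
          · exact absurd ⟨rfl, hv⟩ h01)
      (fun y hy => by
        obtain ⟨⟨hch, hlast⟩, h0⟩ := hy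
        refine ⟨?_, by simp, ?_⟩
        · intro i h
          rcases i with _ | i
          · rw [cons_mk_zero, cons_mk_succ]
            rintro ⟨hs, hy0⟩
            have := h0 hs
            rw [fin_mk_zero] at hy0
            rw [this] at hy0
            exact Bool.noConfusion hy0
          · rw [cons_mk_succ, cons_mk_succ]
            exact fun hc => hch i (by omega) ⟨hc.1, hc.2⟩
        · intro he
          rw [← Fin.succ_last, Fin.cons_succ]
          exact hlast he))
    rw [key]
    rcases s with _ | _
    · rw [card_split (fun y : Fin (k+1) → Bool =>
        (ch (k+1) y ∧ (e = true → y (Fin.last k) = false)) ∧ (false = true → y 0 = false))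
        (fun y => y 0)]
      have e1 : Nat.card {y : Fin (k+1) → Bool //
          ((ch (k+1) y ∧ (e = true → y (Fin.last k) = false)) ∧ (false = true → y 0 = false))
            ∧ y 0 = false} =
          Nat.card {y : Fin (k+1) → Bool //
            ch (k+1) y ∧ y 0 = false ∧ (e = true → y (Fin.last k) = false)} :=
        Nat.card_congr (Equiv.subtypeEquivRight (by tauto))
      have e2 : Nat.card {y : Fin (k+1) → Bool //
          ((ch (k+1) y ∧ (e = true → y (Fin.last k) = false)) ∧ (false = true → y 0 = false))
            ∧ y 0 = true} =
          Nat.card {y : Fin (k+1) → Bool //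
            ch (k+1) y ∧ y 0 = true ∧ (e = true → y (Fin.last k) = false)} :=
        Nat.card_congr (Equiv.subtypeEquivRight (by tauto))
      rw [e1, e2, ih false e, ih true e]
      rcases e with _ | _ <;> simp [Nat.fib_add_two] <;> ring
    · have e1 : Nat.card {y : Fin (k+1) → Bool //
          (ch (k+1) y ∧ (e = true → y (Fin.last k) = false)) ∧ (true = true → y 0 = false)} =
          Nat.card {y : Fin (k+1) → Bool //
            ch (k+1) y ∧ y 0 = false ∧ (e = true → y (Fin.last k) = false)} :=
        Nat.card_congr (Equiv.subtypeEquivRight (by tauto))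
      rw [e1, ih false e]
      rcases e with _ | _ <;> simp

lemma cyc_pair {m : ℕ} {z : Fin m → Bool} (h : cyc m z) {a b : ℕ} (ha : a < m) (hb : b < m)
    (hab : b = (a + 1) % m) : ¬(z ⟨a, ha⟩ = true ∧ z ⟨b, hb⟩ = true) := by
  subst hab
  exact fun hc => h ⟨a, ha⟩ ⟨hc.1, hc.2⟩

lemma cardCh (k : ℕ) : Nat.card {y : Fin k → Bool // ch k y} = Nat.fib (k+2) := by
  cases k with
  | zero =>
    have hne : Nonempty {y : Fin 0 → Bool // ch 0 y} :=
      ⟨⟨fun i => i.elim0, by intro i h; omega⟩⟩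
    have hsub : Subsingleton {y : Fin 0 → Bool // ch 0 y} := by
      constructor; rintro ⟨z, _⟩ ⟨w, _⟩
      apply Subtype.ext; funext i; exact i.elim0
    rw [Nat.card_unique]
    simp [Nat.fib]
  | succ j =>
    rw [card_split (ch (j+1)) (fun y => y 0)]
    have e1 : Nat.card {y : Fin (j+1) → Bool // ch (j+1) y ∧ y 0 = false} =
        Nat.card {y : Fin (j+1) → Bool //
          ch (j+1) y ∧ y 0 = false ∧ (false = true → y (Fin.last j) = false)} :=
      Nat.card_congr (Equiv.subtypeEquivRight (by tauto))
    have e2 : Nat.card {y : Fin (j+1) → Bool // ch (j+1) y ∧ y 0 = true} =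
        Nat.card {y : Fin (j+1) → Bool //
          ch (j+1) y ∧ y 0 = true ∧ (false = true → y (Fin.last j) = false)} :=
      Nat.card_congr (Equiv.subtypeEquivRight (by tauto))
    rw [e1, e2, cardAux j false false, cardAux j true false]
    simp [Nat.fib_add_two]
    ring

lemma cardCyc_false (k : ℕ) :
    Nat.card {z : Fin (k+1) → Bool // cyc (k+1) z ∧ z 0 = false} = Nat.fib (k+2) := by
  rw [← cardCh k]
  apply Nat.card_congr
  refine consEquiv k false (fun z => cyc (k+1) z ∧ z 0 = false) (ch k)
    (fun z hz => hz.2) (fun z hz => ?_) (fun y hy => ?_)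
  · -- tail of a cyclic z is a chain
    intro i h
    exact fun hc => (cyc_pair hz.1 (show i+1 < k+1 by omega) (show i+1+1 < k+1 by omega)
      (Nat.mod_eq_of_lt (by omega)).symm) ⟨hc.1, hc.2⟩
  · -- cons false y is cyclic
    refine ⟨?_, by simp⟩
    intro i
    refine Fin.cases ?_ ?_ i
    · simp
    · intro j
      intro hc
      rcases Nat.lt_or_ge (j.1 + 2) (k+1) with hlt | hge
      · have hY : (⟨(j.succ.1 + 1) % (k+1), Nat.mod_lt _ j.succ.pos⟩ : Fin (k+1)) =
            ⟨j.1 + 1 + 1, by omega⟩ := by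
          apply Fin.ext
          show (j.succ.1 + 1) % (k+1) = j.1 + 1 + 1
          rw [Fin.val_succ]
          exact Nat.mod_eq_of_lt (by omega)
        rw [hY, cons_mk_succ] at hc
        have hc1 : (Fin.cons false y : Fin (k+1) → Bool) j.succ = y j := Fin.cons_succ _ _ j
        rw [hc1] at hc
        exact hy j.1 (by omega) ⟨hc.1, hc.2⟩
      · have hj : j.1 + 2 = k + 1 := by have := j.2; omega
        have hY : (⟨(j.succ.1 + 1) % (k+1), Nat.mod_lt _ j.succ.pos⟩ : Fin (k+1)) =
            ⟨0, by omega⟩ := by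
          apply Fin.ext
          show (j.succ.1 + 1) % (k+1) = 0
          rw [Fin.val_succ, show j.1 + 1 + 1 = k + 1 by omega]
          exact Nat.mod_self _
        rw [hY, cons_mk_zero] at hc
        exact Bool.noConfusion hc.2

noncomputable def cycEquiv_true (j : ℕ) :
    {z : Fin (j+2) → Bool // cyc (j+2) z ∧ z 0 = true} ≃
      {y : Fin (j+1) → Bool //
        ch (j+1) y ∧ y 0 = false ∧ (true = true → y (Fin.last j) = false)} := by
  refine consEquiv (j+1) true (fun z => cyc (j+2) z ∧ z 0 = true)
    (fun y => ch (j+1) y ∧ y 0 = false ∧ (true = true → y (Fin.last j) = false))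
    (fun z hz => hz.2) (fun z hz => ?_) (fun y hy => ?_)
  · refine ⟨?_, ?_, fun _ => ?_⟩
    · -- tail is a chain
      intro i h
      exact fun hc => (cyc_pair hz.1 (show i+1 < j+2 by omega) (show i+1+1 < j+2 by omega)
        (Nat.mod_eq_of_lt (by omega)).symm) ⟨hc.1, hc.2⟩
    · -- y 0 = z 1 = false
      have h2 := cyc_pair hz.1 (a := 0) (b := 1) (by omega) (by omega)
        (Nat.mod_eq_of_lt (by omega)).symm
      rw [fin_mk_zero] at h2
      rw [hz.2] at h2
      show z ((0 : Fin (j+1)).succ) = false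
      rw [Fin.succ_zero_eq_one]
      rw [show (1 : Fin (j+2)) = ⟨1, by omega⟩ from Fin.ext (by simp)]
      cases hv : z ⟨1, by omega⟩
      · rfl
      · exact absurd ⟨rfl, hv⟩ h2
    · -- y last = z last = false
      have h2 := cyc_pair hz.1 (a := j+1) (b := 0) (by omega) (by omega)
        (by rw [show j+1+1 = j+2 by omega]; exact (Nat.mod_self _).symm)
      rw [fin_mk_zero, hz.2] at h2
      show z ((Fin.last j).succ) = false
      rw [Fin.succ_last]
      rw [show (Fin.last (j+1)) = ⟨j+1, by omega⟩ from Fin.ext (by simp)]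
      cases hv : z ⟨j+1, by omega⟩
      · rfl
      · exact absurd ⟨hv, rfl⟩ h2
  · -- cons true y is cyclic
    refine ⟨?_, by simp⟩
    obtain ⟨hch, hy0, hyl⟩ := hy
    intro i
    refine Fin.cases ?_ ?_ i
    · intro hc
      have hY : (⟨((0 : Fin (j+2)).1 + 1) % (j+2), Nat.mod_lt _ (0 : Fin (j+2)).pos⟩ :
          Fin (j+2)) = ⟨0 + 1, by omega⟩ := by
        apply Fin.ext
        show ((0 : Fin (j+2)).1 + 1) % (j+2) = 0 + 1
        rw [Fin.val_zero]
        exact Nat.mod_eq_of_lt (by omega)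
      rw [hY, cons_mk_succ] at hc
      rw [fin_mk_zero, hy0] at hc
      exact Bool.noConfusion hc.2
    · intro p hc
      rcases Nat.lt_or_ge (p.1 + 2) (j+2) with hlt | hge
      · have hY : (⟨(p.succ.1 + 1) % (j+2), Nat.mod_lt _ p.succ.pos⟩ : Fin (j+2)) =
            ⟨p.1 + 1 + 1, by omega⟩ := by
          apply Fin.ext
          show (p.succ.1 + 1) % (j+2) = p.1 + 1 + 1
          rw [Fin.val_succ]
          exact Nat.mod_eq_of_lt (by omega)
        rw [hY, cons_mk_succ] at hc
        have hc1 : (Fin.cons true y : Fin (j+2) → Bool) p.succ = y p := Fin.cons_succ _ _ p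
        rw [hc1] at hc
        exact hch p.1 (by omega) ⟨hc.1, hc.2⟩
      · have hp : p.1 = j := by have := p.2; omega
        have hc1 : (Fin.cons true y : Fin (j+2) → Bool) p.succ = y p := Fin.cons_succ _ _ p
        rw [hc1] at hc
        have hpl : p = Fin.last j := Fin.ext (by simp [hp])
        rw [hpl, hyl rfl] at hc
        exact Bool.noConfusion hc.1

lemma cardCyc_true (j : ℕ) :
    Nat.card {z : Fin (j+2) → Bool // cyc (j+2) z ∧ z 0 = true} = Nat.fib (j+1) := by
  rw [Nat.card_congr (cycEquiv_true j), cardAux j false true]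
  norm_num

lemma cardCyc (k : ℕ) :
    Nat.card {z : Fin (k+1) → Bool // cyc (k+1) z} = Nat.fib (k+2) + Nat.fib k := by
  rw [card_split (cyc (k+1)) (fun z => z 0)]
  congr 1
  · exact cardCyc_false k
  · cases k with
    | zero =>
      have : IsEmpty {z : Fin 1 → Bool // cyc 1 z ∧ z 0 = true} := by
        constructor; rintro ⟨z, hc, hz⟩
        have h2 := cyc_pair hc (a := 0) (b := 0) (by omega) (by omega) (by omega)
        rw [fin_mk_zero] at h2
        exact h2 ⟨hz, hz⟩
      rw [Nat.card_of_isEmpty]; simp [Nat.fib]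
    | succ j => exact cardCyc_true j

lemma lucas_add : ∀ m, lucas (m+1) = Nat.fib (m+2) + Nat.fib m := by
  have H : ∀ m, lucas (m+1) = Nat.fib (m+2) + Nat.fib m ∧
      lucas (m+2) = Nat.fib (m+3) + Nat.fib (m+1) := by
    intro m
    induction m with
    | zero => constructor <;> decide
    | succ k ih =>
      refine ⟨ih.2, ?_⟩
      rw [show lucas (k+1+2) = lucas (k+2) + lucas (k+1) by simp [lucas], ih.1, ih.2,
        show Nat.fib (k+1+3) = Nat.fib (k+2) + Nat.fib (k+3) from Nat.fib_add_two,
        show Nat.fib (k+3) = Nat.fib (k+1) + Nat.fib (k+2) from Nat.fib_add_two,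
        show Nat.fib (k+2) = Nat.fib k + Nat.fib (k+1) from Nat.fib_add_two]
      ring
  exact fun m => (H m).1

noncomputable def bp (p : Prop) : Bool := @decide p (Classical.propDecidable p)

lemma bp_pos {p : Prop} (h : p) : bp p = true := by simp [bp, h]

lemma bp_neg {p : Prop} (h : ¬p) : bp p = false := by simp [bp, h]

noncomputable def crZ (n : ℕ) (F : Set (Crown n)) : Fin (2*n) → Bool := fun j =>
  if j.1 % 2 = 1 then bp (Sum.inl (⟨j.1/2, by have := j.2; omega⟩ : Fin n) ∈ F)
  else !(bp (Sum.inr (⟨j.1/2, by have := j.2; omega⟩ : Fin n) ∈ F))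

def crW (n : ℕ) (z : Fin (2*n) → Bool) : Set (Crown n) := fun c =>
  match c with
  | Sum.inl i => z ⟨2*i.1+1, by have := i.2; omega⟩ = true
  | Sum.inr i => z ⟨2*i.1, by have := i.2; omega⟩ = false

lemma crZ_odd (n : ℕ) (F : Set (Crown n)) (a : ℕ) (h2 : a % 2 = 1) (ha : a < 2*n) :
    crZ n F ⟨a, ha⟩ = bp (Sum.inl (⟨a/2, by omega⟩ : Fin n) ∈ F) := by
  simp only [crZ]
  rw [if_pos h2]

lemma crZ_even (n : ℕ) (F : Set (Crown n)) (a : ℕ) (h2 : a % 2 = 0) (ha : a < 2*n) :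
    crZ n F ⟨a, ha⟩ = !(bp (Sum.inr (⟨a/2, by omega⟩ : Fin n) ∈ F)) := by
  simp only [crZ]
  rw [if_neg (by omega)]

lemma mem_crW_inl (n : ℕ) (z : Fin (2*n) → Bool) (i : Fin n) :
    (Sum.inl i ∈ crW n z) ↔ z ⟨2*i.1+1, by have := i.2; omega⟩ = true := Iff.rfl

lemma mem_crW_inr (n : ℕ) (z : Fin (2*n) → Bool) (i : Fin n) :
    (Sum.inr i ∈ crW n z) ↔ z ⟨2*i.1, by have := i.2; omega⟩ = false := Iff.rfl

lemma crW_crZ (n : ℕ) (F : Set (Crown n)) : crW n (crZ n F) = F := by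
  apply Set.ext
  intro c
  rcases c with i | i
  · show (Sum.inl i : Crown n) ∈ crW n (crZ n F) ↔ (Sum.inl i : Crown n) ∈ F
    rw [mem_crW_inl, crZ_odd n F (2*i.1+1) (by omega) (by have := i.2; omega)]
    rw [show (⟨(2*i.1+1)/2, by omega⟩ : Fin n) = i from Fin.ext (by first | (simp; omega) | simp | omega)]
    constructor
    · intro h
      by_contra hF
      rw [bp_neg hF] at h
      exact Bool.noConfusion h
    · intro h; rw [bp_pos h]
  · show (Sum.inr i : Crown n) ∈ crW n (crZ n F) ↔ (Sum.inr i : Crown n) ∈ F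
    rw [mem_crW_inr, crZ_even n F (2*i.1) (by omega) (by have := i.2; omega)]
    rw [show (⟨(2*i.1)/2, by omega⟩ : Fin n) = i from Fin.ext (by first | (simp; omega) | simp | omega)]
    constructor
    · intro h
      by_contra hF
      rw [bp_neg hF] at h
      exact Bool.noConfusion h
    · intro h; rw [bp_pos h]; rfl

lemma crZ_crW (n : ℕ) (z : Fin (2*n) → Bool) : crZ n (crW n z) = z := by
  funext j
  have hj2 := j.2
  rcases Nat.even_or_odd j.1 with he | ho
  · obtain ⟨r, hr⟩ := he
    have hj : j = ⟨2*(j.1/2), by omega⟩ := Fin.ext (by first | (simp; omega) | simp | omega)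
    rw [hj, crZ_even n _ (2*(j.1/2)) (by omega) (by omega)]
    rw [show (⟨(2*(j.1/2))/2, by omega⟩ : Fin n) = ⟨j.1/2, by omega⟩ from Fin.ext (by first | (simp; omega) | simp | omega)]
    by_cases hm : Sum.inr (⟨j.1/2, by omega⟩ : Fin n) ∈ crW n z
    · rw [bp_pos hm]
      have hv : z ⟨2*(j.1/2), by omega⟩ = false := hm
      rw [hv]; rfl
    · rw [bp_neg hm]
      have hv : ¬ (z ⟨2*(j.1/2), by omega⟩ = false) := hm
      cases hz : z ⟨2*(j.1/2), by omega⟩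
      · exact absurd hz hv
      · rfl
  · obtain ⟨r, hr⟩ := ho
    have hj : j = ⟨2*(j.1/2)+1, by omega⟩ := Fin.ext (by first | (simp; omega) | simp | omega)
    rw [hj, crZ_odd n _ (2*(j.1/2)+1) (by omega) (by omega)]
    rw [show (⟨(2*(j.1/2)+1)/2, by omega⟩ : Fin n) = ⟨j.1/2, by omega⟩ from Fin.ext (by first | (simp; omega) | simp | omega)]
    by_cases hm : Sum.inl (⟨j.1/2, by omega⟩ : Fin n) ∈ crW n z
    · rw [bp_pos hm]
      have hv : z ⟨2*(j.1/2)+1, by omega⟩ = true := hm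
      rw [hv]
    · rw [bp_neg hm]
      have hv : ¬ (z ⟨2*(j.1/2)+1, by omega⟩ = true) := hm
      cases hz : z ⟨2*(j.1/2)+1, by omega⟩
      · rfl
      · exact absurd hz hv

lemma upper_iff {n : ℕ} [NeZero n] (F : Set (Crown n)) :
    IsUpperSet F ↔ ∀ i : Fin n, Sum.inl i ∈ F → Sum.inr i ∈ F ∧ Sum.inr (i+1) ∈ F := by
  constructor
  · intro h i hi
    refine ⟨h ?_ hi, h ?_ hi⟩
    · exact Or.inr ⟨i, i, rfl, rfl, Or.inl rfl⟩
    · exact Or.inr ⟨i, i+1, rfl, rfl, Or.inr rfl⟩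
  · intro h a b hab ha
    rcases hab with rfl | ⟨i, j, rfl, rfl, hj⟩
    · exact ha
    · rcases hj with rfl | rfl
      · exact (h _ ha).1
      · exact (h _ ha).2

lemma fin_add_one_val {n : ℕ} [NeZero n] (i : Fin n) :
    ((i+1 : Fin n)).1 = (i.1 + 1) % n := by
  rw [Fin.val_add, show ((1 : Fin n)).1 = 1 % n from Fin.val_one' n,
    Nat.add_mod i.1 1 n, Nat.mod_eq_of_lt i.2]

lemma next_even {n : ℕ} (c : ℕ) (hc : c < n) : (2*c+1+1) % (2*n) = 2*((c+1) % n) := by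
  rcases Nat.lt_or_ge (c+1) n with hlt | hge
  · rw [Nat.mod_eq_of_lt (by omega), Nat.mod_eq_of_lt hlt]; omega
  · have h1 : c+1 = n := by omega
    rw [h1, Nat.mod_self, show 2*c+1+1 = 2*n by omega, Nat.mod_self, Nat.mul_zero]

lemma cond_iff {n : ℕ} [NeZero n] (hn : 1 ≤ n) (F : Set (Crown n)) :
    IsUpperSet F ↔ cyc (2*n) (crZ n F) := by
  rw [upper_iff]
  constructor
  · intro h
    intro j
    intro hc
    obtain ⟨hc1, hc2⟩ := hc
    have hj2 := j.2
    have hj : j = ⟨j.1, j.2⟩ := Fin.ext rfl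
    rcases Nat.even_or_odd j.1 with he | ho
    · -- even position 2r : edge b_r ← a_r
      obtain ⟨r, hr⟩ := he
      rw [hj, crZ_even n F j.1 (by omega) j.2] at hc1
      rw [zmk (crZ n F) _ (show j.1+1 < 2*n by omega) (Nat.mod_eq_of_lt (by omega))] at hc2
      rw [crZ_odd n F (j.1+1) (by omega) (by omega)] at hc2
      have hmem : Sum.inl (⟨(j.1+1)/2, by omega⟩ : Fin n) ∈ F := by
        by_contra hF
        rw [bp_neg hF] at hc2
        exact Bool.noConfusion hc2
      rw [show (⟨(j.1+1)/2, by omega⟩ : Fin n) = ⟨j.1/2, by omega⟩ from Fin.ext (by first | (simp; omega) | simp | omega)]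
        at hmem
      have hb := (h _ hmem).1
      rw [bp_pos hb] at hc1
      exact Bool.noConfusion hc1
    · -- odd position 2r+1 : edge a_r → b_{r+1}
      obtain ⟨r, hr⟩ := ho
      rw [hj, crZ_odd n F j.1 (by omega) j.2] at hc1
      have hmem : Sum.inl (⟨j.1/2, by omega⟩ : Fin n) ∈ F := by
        by_contra hF
        rw [bp_neg hF] at hc1
        exact Bool.noConfusion hc1
      have hb := (h _ hmem).2
      have hX : (j.1/2 + 1) % n < n := Nat.mod_lt _ (by omega)
      have hnext : (j.1+1) % (2*n) = 2*((j.1/2 + 1) % n) := by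
        rw [show j.1+1 = 2*(j.1/2)+1+1 by omega]
        exact next_even (j.1/2) (by omega)
      rw [zmk (crZ n F) _ (show 2*((j.1/2+1) % n) < 2*n by omega) hnext] at hc2
      rw [crZ_even n F _ (Nat.mul_mod_right 2 _) (by omega)] at hc2
      rw [show (⟨2*((j.1/2+1) % n)/2, by omega⟩ : Fin n) = ((⟨j.1/2, by omega⟩ : Fin n) + 1)
        from Fin.ext (by rw [fin_add_one_val]; first | (simp; omega) | simp | omega)] at hc2
      rw [bp_pos hb] at hc2
      exact Bool.noConfusion hc2
  · intro h i hi
    constructor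
    · have h2 := cyc_pair h (a := 2*i.1) (b := 2*i.1+1) (by have := i.2; omega)
        (by have := i.2; omega) (Nat.mod_eq_of_lt (by have := i.2; omega)).symm
      rw [crZ_even n F (2*i.1) (by omega) (by have := i.2; omega)] at h2
      rw [crZ_odd n F (2*i.1+1) (by omega) (by have := i.2; omega)] at h2
      rw [show (⟨2*i.1/2, by omega⟩ : Fin n) = i from Fin.ext (by first | (simp; omega) | simp | omega)] at h2
      rw [show (⟨(2*i.1+1)/2, by omega⟩ : Fin n) = i from Fin.ext (by first | (simp; omega) | simp | omega)] at h2
      rw [bp_pos hi] at h2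
      by_contra hbF
      rw [bp_neg hbF] at h2
      exact h2 ⟨by simp, rfl⟩
    · have hX : (i.1 + 1) % n < n := Nat.mod_lt _ (by have := i.2; omega)
      have h2 := cyc_pair h (a := 2*i.1+1) (b := 2*((i.1+1) % n)) (by have := i.2; omega)
        (by omega) (next_even i.1 i.2).symm
      rw [crZ_odd n F (2*i.1+1) (by omega) (by have := i.2; omega)] at h2
      rw [show (⟨(2*i.1+1)/2, by omega⟩ : Fin n) = i from Fin.ext (by first | (simp; omega) | simp | omega)] at h2
      rw [crZ_even n F (2*((i.1+1) % n)) (Nat.mul_mod_right 2 _) (by omega)] at h2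
      rw [show (⟨2*((i.1+1) % n)/2, by omega⟩ : Fin n) = i + 1
        from Fin.ext (by rw [fin_add_one_val]; first | (simp; omega) | simp | omega)] at h2
      rw [bp_pos hi] at h2
      by_contra hbF
      rw [bp_neg hbF] at h2
      exact h2 ⟨rfl, by simp⟩

noncomputable def crownEquiv (n : ℕ) [NeZero n] (hn : 1 ≤ n) :
    {F : Set (Crown n) // IsUpperSet F} ≃ {z : Fin (2*n) → Bool // cyc (2*n) z} where
  toFun F := ⟨crZ n F.1, (cond_iff hn F.1).mp F.2⟩
  invFun z := ⟨crW n z.1, (cond_iff hn (crW n z.1)).mpr (by rw [crZ_crW]; exact z.2)⟩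
  left_inv F := Subtype.ext (crW_crZ n F.1)
  right_inv z := Subtype.ext (crZ_crW n z.1)

/-- The number of upper sets of the crown `⋈_{2n}` equals the Lucas number `L_{2n}`,
and `L_{2n} = F_{2n+1} + F_{2n−1}`. -/
theorem crown_upperSets_lucas (n : ℕ) (hn : 1 ≤ n) :
    haveI : NeZero n := ⟨by omega⟩
    Nat.card {F : Set (Crown n) // IsUpperSet F} = lucas (2 * n) ∧
      lucas (2 * n) = Nat.fib (2 * n + 1) + Nat.fib (2 * n - 1) := by
  haveI : NeZero n := ⟨by omega⟩
  obtain ⟨m, hm⟩ : ∃ m, 2*n = m+1 := ⟨2*n-1, by omega⟩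
  have hluc : lucas (2*n) = Nat.fib (2*n+1) + Nat.fib (2*n-1) := by
    rw [hm, lucas_add m, show m+1+1 = m+2 by omega, show m+1-1 = m by omega]
  refine ⟨?_, hluc⟩
  rw [Nat.card_congr (crownEquiv n hn), hluc, hm, cardCyc m,
    show m+1+1 = m+2 by omega, show m+1-1 = m by omega]
end

section
/- Let L be a finite distributive lattice and let q_k(L) denote the number of intervals of L that are isomorphic to the Boolean lattice B_k of rank k (equivalently, intervals [x,y] such that y is the join of k atoms of [x,y] and [x,y] is Boolean). Then q_0(L) − q_1(L) + q_2(L) − q_3(L) + ⋯ = 1. -/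
open Finset
open scoped Classical
set_option linter.unusedSectionVars false

section Aux
variable {L : Type*} [DistribLattice L] [Fintype L]
noncomputable def covs (y : L) : Finset L := Finset.univ.filter (· ⋖ y)

lemma mem_covs {a y : L} : a ∈ covs y ↔ a ⋖ y := by simp [covs]

variable [BoundedOrder L]

noncomputable def mS (S : Finset L) (y : L) : L := S.inf id ⊓ y

lemma mS_le_top (S : Finset L) (y : L) : mS S y ≤ y := inf_le_right

lemma mS_le {S : Finset L} {y a : L} (ha : a ∈ S) : mS S y ≤ a :=
  inf_le_left.trans (Finset.inf_le ha)

lemma le_mS {S : Finset L} {y z : L} (hz : ∀ a ∈ S, z ≤ a) (hy : z ≤ y) : z ≤ mS S y :=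
  le_inf (Finset.le_inf hz) hy

lemma covs_join {a b y : L} (ha : a ⋖ y) (hb : b ⋖ y) (hne : a ≠ b) : a ⊔ b = y := by
  have hab : ¬ a ≤ b := by
    intro h
    rcases lt_or_eq_of_le h with h' | h'
    · exact ha.2 h' hb.1
    · exact hne h'
  have h1 : b < a ⊔ b := lt_of_le_of_ne le_sup_right (fun h => hab (h ▸ le_sup_left))
  have h2 : a ⊔ b ≤ y := sup_le ha.1.le hb.1.le
  rcases lt_or_eq_of_le h2 with h' | h'
  · exact absurd h' (hb.2 h1)
  · exact h'

/-- join of an outside cover with mS is y -/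
lemma covs_join_mS {S : Finset L} {y a : L} (hS : S ⊆ covs y) (ha : a ⋖ y) (haS : a ∉ S) :
    a ⊔ mS S y = y := by
  have : a ⊔ mS S y = (S.inf fun b => a ⊔ b) ⊓ (a ⊔ y) := by
    rw [mS, sup_inf_left, Finset.inf_sup_distrib_left]
    rfl
  rw [this]
  have hay : a ⊔ y = y := sup_eq_right.2 ha.1.le
  rw [hay]
  have h1 : y ≤ S.inf fun b => a ⊔ b := by
    apply Finset.le_inf
    intro b hb
    rw [covs_join ha (mem_covs.1 (hS hb)) (fun h => haS (h ▸ hb))]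
  exact le_antisymm inf_le_right (le_inf h1 le_rfl)

lemma rep_mS {S : Finset L} {y z : L} (hS : S ⊆ covs y) (hz1 : mS S y ≤ z) (hz2 : z ≤ y) :
    z = mS (S.filter (z ≤ ·)) y := by
  set T := S.filter (z ≤ ·) with hT
  have h1 : z ≤ mS T y := le_mS (fun a ha => (Finset.mem_filter.1 ha).2) hz2
  have h2 : mS T y ≤ z := by
    have key : z = (S.inf fun b => z ⊔ b) ⊓ y := by
      calc z = z ⊔ mS S y := (sup_eq_left.2 hz1).symm
      _ = (z ⊔ S.inf id) ⊓ (z ⊔ y) := by rw [mS, sup_inf_left]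
      _ = (S.inf fun b => z ⊔ b) ⊓ y := by
          rw [Finset.inf_sup_distrib_left, sup_eq_right.2 hz2]; rfl
    rw [key]
    apply le_inf _ inf_le_right
    apply Finset.le_inf
    intro b hb
    by_cases hzb : z ≤ b
    · have hbT : b ∈ T := Finset.mem_filter.2 ⟨hb, hzb⟩
      exact inf_le_left.trans ((Finset.inf_le hbT).trans le_sup_right)
    · have : z ⊔ b = y := by
        have hby := mem_covs.1 (hS hb)
        have h1 : b < z ⊔ b := lt_of_le_of_ne le_sup_right (fun h => hzb (h ▸ le_sup_left))
        have h2 : z ⊔ b ≤ y := sup_le hz2 hby.1.le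
        rcases lt_or_eq_of_le h2 with h' | h'
        · exact absurd h' (hby.2 h1)
        · exact h'
      rw [this]; exact inf_le_right
  exact le_antisymm h1 h2

lemma mS_inj {S S' : Finset L} {y : L} (hS : S ⊆ covs y) (hS' : S' ⊆ covs y)
    (h : mS S y = mS S' y) : S = S' := by
  have key : ∀ S S' : Finset L, S ⊆ covs y → S' ⊆ covs y → mS S y = mS S' y → S ⊆ S' := by
    intro S S' hS hS' h a haS
    by_contra haS'
    have ha := mem_covs.1 (hS haS)
    have h1 : a ⊔ mS S' y = y := covs_join_mS hS' ha haS'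
    rw [← h] at h1
    rw [sup_eq_left.2 (mS_le haS)] at h1
    exact ha.1.ne h1
  exact le_antisymm (key S S' hS hS' h) (key S' S hS' hS h.symm)

lemma mS_mono {S T : Finset L} {y : L} (h : T ⊆ S) : mS S y ≤ mS T y :=
  inf_le_inf_right y (Finset.inf_mono h)

lemma not_mS_le {S : Finset L} {y a : L} (hS : S ⊆ covs y) (ha : a ⋖ y) (haS : a ∉ S) :
    ¬ mS S y ≤ a := fun h =>
  ha.1.ne (by rw [← covs_join_mS hS ha haS, sup_eq_left.2 h])

/-- The boolean interval order iso. -/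
noncomputable def iccIso {S : Finset L} {y : L} {k : ℕ} (hS : S ⊆ covs y) (hk : S.card = k) :
    Set.Icc (mS S y) y ≃o Set (Fin k) := by
  have σ : {a // a ∈ S} ≃ Fin k := S.equivFinOfCardEq hk
  refine
  { toFun := fun z => {i | ¬ (z : L) ≤ (σ.symm i : L)}
    invFun := fun T =>
      ⟨mS (S.filter fun a => ∃ h : a ∈ S, σ ⟨a, h⟩ ∉ T) y,
        Set.mem_Icc.2 ⟨mS_mono (Finset.filter_subset _ _), mS_le_top _ _⟩⟩
    left_inv := ?_
    right_inv := ?_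
    map_rel_iff' := ?_ }
  · -- left inverse
    intro z
    have hz := Set.mem_Icc.1 z.2
    apply Subtype.ext
    have hfe : (S.filter fun a => ∃ h : a ∈ S, σ ⟨a, h⟩ ∉ {i | ¬ (z : L) ≤ (σ.symm i : L)}) =
        S.filter ((z : L) ≤ ·) := by
      ext a
      simp only [Finset.mem_filter, Set.mem_setOf_eq, not_not, Equiv.symm_apply_apply]
      constructor
      · rintro ⟨ha, h, h2⟩; exact ⟨ha, h2⟩
      · rintro ⟨ha, h⟩; exact ⟨ha, ha, h⟩
    dsimp only
    rw [Finset.filter_congr_decidable]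
    exact (congrArg (fun t => mS t y) hfe).trans (rep_mS hS hz.1 hz.2).symm
  · -- right inverse
    intro T
    ext i
    set ST := S.filter fun a => ∃ h : a ∈ S, σ ⟨a, h⟩ ∉ T with hST
    have hSTsub : ST ⊆ covs y := (Finset.filter_subset _ _).trans hS
    have ha : ((σ.symm i : {a // a ∈ S}) : L) ∈ S := (σ.symm i).2
    simp only [Set.mem_setOf_eq]
    constructor
    · intro h
      by_contra hiT
      have : ((σ.symm i : {a // a ∈ S}) : L) ∈ ST := by
        refine Finset.mem_filter.2 ⟨ha, ⟨ha, ?_⟩⟩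
        have : (⟨((σ.symm i : {a // a ∈ S}) : L), ha⟩ : {a // a ∈ S}) = σ.symm i :=
          Subtype.ext rfl
        rw [this, Equiv.apply_symm_apply]
        exact hiT
      exact h (mS_le this)
    · intro hiT h
      have hnotin : ((σ.symm i : {a // a ∈ S}) : L) ∉ ST := by
        intro hmem
        obtain ⟨_, h2, h3⟩ := Finset.mem_filter.1 hmem
        have : (⟨((σ.symm i : {a // a ∈ S}) : L), h2⟩ : {a // a ∈ S}) = σ.symm i :=
          Subtype.ext rfl
        rw [this, Equiv.apply_symm_apply] at h3
        exact h3 hiT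
      exact not_mS_le hSTsub (mem_covs.1 (hS ha)) hnotin h
  · -- map_rel_iff
    intro z z'
    simp only [Equiv.coe_fn_mk, Set.le_eq_subset, Set.setOf_subset_setOf]
    constructor
    · intro h
      -- use: z = mS (filter (z≤·)) etc; show z ≤ z' via: for all a ∈ S with z' ≤ a, z ≤ a
      have hz := Set.mem_Icc.1 z.2
      have hz' := Set.mem_Icc.1 z'.2
      show (z : L) ≤ (z' : L)
      rw [show (z : L) = mS (S.filter ((z : L) ≤ ·)) y from rep_mS hS hz.1 hz.2,
        show (z' : L) = mS (S.filter ((z' : L) ≤ ·)) y from rep_mS hS hz'.1 hz'.2]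
      apply mS_mono
      intro a haf
      obtain ⟨haS, hle⟩ := Finset.mem_filter.1 haf
      refine Finset.mem_filter.2 ⟨haS, ?_⟩
      by_contra hna
      have := h (σ ⟨a, haS⟩) (by simpa [Equiv.symm_apply_apply] using hna)
      simp only [Equiv.symm_apply_apply] at this
      exact this hle
    · intro h i hi hle
      exact hi (le_trans h hle)

/-- cover in Icc transfers to cover in L -/
lemma covBy_of_covBy_Icc {x y : L} {u v : Set.Icc x y} (h : u ⋖ v) : (u : L) ⋖ (v : L) := by
  constructor
  · exact h.1
  · intro c hc1 hc2
    have hcm : c ∈ Set.Icc x y :=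
      Set.mem_Icc.2 ⟨(Set.mem_Icc.1 u.2).1.trans hc1.le, hc2.le.trans (Set.mem_Icc.1 v.2).2⟩
    have h1 : u < (⟨c, hcm⟩ : Set.Icc x y) := by exact_mod_cast hc1
    have h2 : (⟨c, hcm⟩ : Set.Icc x y) < v := by exact_mod_cast hc2
    exact h.2 h1 h2

/-- forward classification -/
lemma exists_of_iso {x y : L} {k : ℕ} (hxy : x ≤ y) (e : Set.Icc x y ≃o Set (Fin k)) :
    ∃ S : Finset L, S ⊆ covs y ∧ S.card = k ∧ mS S y = x := by
  set a : Fin k → L := fun i => ((e.symm {i}ᶜ : Set.Icc x y) : L) with ha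
  have hainj : Function.Injective a := by
    intro i j hij
    have h2 : ({i}ᶜ : Set (Fin k)) = ({j}ᶜ : Set (Fin k)) :=
      e.symm.injective (Subtype.ext hij)
    have h3 : ({i} : Set (Fin k)) = {j} := by
      rw [← compl_compl ({i} : Set (Fin k)), h2, compl_compl]
    exact Set.singleton_eq_singleton_iff.1 h3
  have hmem : ∀ i, a i ∈ Set.Icc x y := fun i => (e.symm {i}ᶜ).2
  -- e.symm univ is ⟨y⟩
  have htop : e.symm Set.univ = ⟨y, Set.mem_Icc.2 ⟨hxy, le_rfl⟩⟩ := by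
    apply le_antisymm
    · exact (Set.mem_Icc.1 (e.symm Set.univ).2).2
    · rw [← e.symm_apply_apply ⟨y, Set.mem_Icc.2 ⟨hxy, le_rfl⟩⟩]
      exact e.symm.monotone (Set.subset_univ _)
  have hcov : ∀ i, a i ⋖ y := by
    intro i
    have h1 : ({i}ᶜ : Set (Fin k)) ⋖ ⊤ := (Set.isAtom_singleton i).compl.covBy_top
    rw [Set.top_eq_univ] at h1
    have h2 : e.symm {i}ᶜ ⋖ e.symm Set.univ := (apply_covBy_apply_iff e.symm).2 h1
    rw [htop] at h2
    exact covBy_of_covBy_Icc h2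
  refine ⟨Finset.univ.image a, ?_, ?_, ?_⟩
  · intro b hb
    obtain ⟨i, _, rfl⟩ := Finset.mem_image.1 hb
    exact mem_covs.2 (hcov i)
  · rw [Finset.card_image_of_injective _ hainj, Finset.card_univ, Fintype.card_fin]
  · set S := Finset.univ.image a with hS
    have h1 : x ≤ mS S y := by
      apply le_mS _ hxy
      intro b hb
      obtain ⟨i, _, rfl⟩ := Finset.mem_image.1 hb
      exact (Set.mem_Icc.1 (hmem i)).1
    have hmm : mS S y ∈ Set.Icc x y := Set.mem_Icc.2 ⟨h1, mS_le_top _ _⟩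
    have h2 : mS S y ≤ x := by
      -- e ⟨mS S y⟩ ⊆ ∅
      have hsub : e ⟨mS S y, hmm⟩ ⊆ (∅ : Set (Fin k)) := by
        intro j hj
        have hle : (⟨mS S y, hmm⟩ : Set.Icc x y) ≤ e.symm {j}ᶜ := by
          show mS S y ≤ a j
          exact mS_le (Finset.mem_image.2 ⟨j, Finset.mem_univ j, rfl⟩)
        have := e.monotone hle
        rw [e.apply_symm_apply] at this
        exact (this hj) rfl
      have hx' : e ⟨x, Set.mem_Icc.2 ⟨le_rfl, hxy⟩⟩ ⊆ (∅ : Set (Fin k)) := by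
        have hle : e.symm (e ⟨x, Set.mem_Icc.2 ⟨le_rfl, hxy⟩⟩) ≤ e.symm ∅ := by
          rw [e.symm_apply_apply]
          exact (Set.mem_Icc.1 (e.symm ∅).2).1
        have := e.symm.le_iff_le.1 hle
        simpa using this
      have : (⟨mS S y, hmm⟩ : Set.Icc x y) = ⟨x, Set.mem_Icc.2 ⟨le_rfl, hxy⟩⟩ :=
        e.injective (by rw [Set.subset_empty_iff.1 hsub, Set.subset_empty_iff.1 hx'])
      exact le_of_eq (congrArg Subtype.val this)
    exact le_antisymm h2 h1

lemma card_fiber (y : L) (k : ℕ) :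
    Nat.card {x : L // x ≤ y ∧ Nonempty (Set.Icc x y ≃o Set (Fin k))} =
      (covs y).card.choose k := by
  have hbij : Function.Bijective
      (fun S : {S : Finset L // S ∈ (covs y).powersetCard k} =>
        (⟨mS S.1 y, mS_le_top _ _,
          ⟨iccIso ((Finset.mem_powersetCard.1 S.2).1) ((Finset.mem_powersetCard.1 S.2).2)⟩⟩ :
          {x : L // x ≤ y ∧ Nonempty (Set.Icc x y ≃o Set (Fin k))})) := by
    constructor
    · rintro ⟨S, hS⟩ ⟨S', hS'⟩ h
      have := congrArg Subtype.val h
      exact Subtype.ext (mS_inj (Finset.mem_powersetCard.1 hS).1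
        (Finset.mem_powersetCard.1 hS').1 this)
    · rintro ⟨x, hxy, ⟨e⟩⟩
      obtain ⟨S, hS1, hS2, hS3⟩ := exists_of_iso hxy e
      exact ⟨⟨S, Finset.mem_powersetCard.2 ⟨hS1, hS2⟩⟩, Subtype.ext hS3⟩
  rw [← Nat.card_eq_of_bijective _ hbij, Nat.card_eq_fintype_card, Fintype.card_coe,
    Finset.card_powersetCard]

lemma card_total (k : ℕ) :
    Nat.card {p : L × L // p.1 ≤ p.2 ∧ Nonempty (Set.Icc p.1 p.2 ≃o Set (Fin k))} =
      ∑ y : L, (covs y).card.choose k := by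
  have E : {p : L × L // p.1 ≤ p.2 ∧ Nonempty (Set.Icc p.1 p.2 ≃o Set (Fin k))} ≃
      Σ y : L, {x : L // x ≤ y ∧ Nonempty (Set.Icc x y ≃o Set (Fin k))} :=
    { toFun := fun p => ⟨p.1.2, ⟨p.1.1, p.2⟩⟩
      invFun := fun s => ⟨(s.2.1, s.1), s.2.2⟩
      left_inv := fun p => rfl
      right_inv := fun s => rfl }
  rw [Nat.card_congr E, Nat.card_eq_fintype_card, Fintype.card_sigma]
  congr 1
  ext y
  rw [← Nat.card_eq_fintype_card, card_fiber]
lemma covs_eq_empty_iff [BoundedOrder L] {y : L} : covs y = ∅ ↔ y = ⊥ := by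
  constructor
  · intro h
    by_contra hy
    have hlt : (⊥ : L) < y := bot_lt_iff_ne_bot.2 hy
    obtain ⟨m, hm1, hm2⟩ := (Finset.univ.filter (· < y)).exists_maximal
      ⟨⊥, Finset.mem_filter.2 ⟨Finset.mem_univ _, hlt⟩⟩
    have hmy : m < y := (Finset.mem_filter.1 hm1).2
    have : m ∈ covs y := mem_covs.2 ⟨hmy, fun c hc1 hc2 =>
      not_lt_of_ge (hm2 (Finset.mem_filter.2 ⟨Finset.mem_univ _, hc2⟩) hc1.le) hc1⟩
    rw [h] at this
    exact absurd this (Finset.notMem_empty _)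
  · rintro rfl
    rw [Finset.eq_empty_iff_forall_notMem]
    intro a ha
    exact not_lt_bot (mem_covs.1 ha).1

end Aux

/-- For a finite distributive lattice `L`, where `q k` denotes the number of intervals
of `L` isomorphic to the Boolean lattice `B_k` of rank `k`, the alternating sum
`q 0 − q 1 + q 2 − q 3 + ⋯` equals `1`. -/
theorem alternating_sum_boolean_intervals (L : Type*) [DistribLattice L] [Fintype L]
    [Nonempty L] :
    ∑ k ∈ Finset.range (Fintype.card L + 1),
      (-1 : ℤ) ^ k *
        (Nat.card {p : L × L // p.1 ≤ p.2 ∧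
          Nonempty (Set.Icc p.1 p.2 ≃o Set (Fin k))} : ℤ) = 1 := by
  haveI : BoundedOrder L :=
    { top := Finset.univ.sup' Finset.univ_nonempty id
      le_top := fun a => Finset.le_sup' id (Finset.mem_univ a)
      bot := Finset.univ.inf' Finset.univ_nonempty id
      bot_le := fun a => Finset.inf'_le id (Finset.mem_univ a) }
  have hrw : ∀ k, (Nat.card {p : L × L // p.1 ≤ p.2 ∧
      Nonempty (Set.Icc p.1 p.2 ≃o Set (Fin k))} : ℤ) =
      ∑ y : L, ((covs y).card.choose k : ℤ) := by
    intro k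
    rw [card_total k]
    push_cast
    rfl
  rw [Finset.sum_congr rfl fun k _ => by rw [hrw k]]
  have step1 : ∑ k ∈ Finset.range (Fintype.card L + 1),
      (-1 : ℤ) ^ k * ∑ y : L, ((covs y).card.choose k : ℤ) =
      ∑ y : L, ∑ k ∈ Finset.range (Fintype.card L + 1),
        (-1 : ℤ) ^ k * ((covs y).card.choose k : ℤ) := by
    simp_rw [Finset.mul_sum]
    exact Finset.sum_comm
  rw [step1]
  have step2 : ∀ y : L, ∑ k ∈ Finset.range (Fintype.card L + 1),
      (-1 : ℤ) ^ k * ((covs y).card.choose k : ℤ) =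
      if (covs y).card = 0 then 1 else 0 := by
    intro y
    have hm : (covs y).card ≤ Fintype.card L := by
      rw [covs]; exact (Finset.card_filter_le _ _).trans (le_of_eq (Finset.card_univ))
    rw [← Finset.sum_subset (Finset.range_subset_range.2 (Nat.succ_le_succ hm))
      (fun k _ hk => by
        rw [Nat.choose_eq_zero_of_lt (by simpa using Finset.mem_range.not.1 hk), Nat.cast_zero,
          mul_zero])]
    exact Int.alternating_sum_range_choose
  rw [Finset.sum_congr rfl fun y _ => step2 y, Finset.sum_boole]
  have : (Finset.univ.filter fun y : L => (covs y).card = 0) = {⊥} := by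
    ext y
    simp only [Finset.mem_filter, Finset.mem_univ, true_and, Finset.mem_singleton,
      Finset.card_eq_zero]
    exact covs_eq_empty_iff
  rw [this]
  simp
end
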